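/- Let $M_1, \ldots, M_m$ be $n \times n$ complex matrices, let $P = M_1 \cdots M_m$, and let $\mathcal{M}$ be the $mn \times mn$ block cyclic matrix whose $(k, k+1)$ block is $M_k$ for $1 \le k \le m-1$, whose $(m,1)$ block is $M_m$, and all other blocks zero. Then for every $z \in \mathbb{C}$, $\det(\mathcal{M}^m - zI_{mn}) = [\det(P - zI_n)]^m$. -/

import Mathlib

open Matrix

/-- The `mn × mn` block cyclic linearization: block `(a, a+1)` (cyclically) is `Ms a`,
all other blocks vanish. -/
def blockCyclic {m n : ℕ} [NeZero m] (Ms : Fin m → Matrix (Fin n) (Fin n) ℂ) :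
    Matrix (Fin m × Fin n) (Fin m × Fin n) ℂ :=
  fun p q => if q.1 = p.1 + 1 then Ms p.1 p.2 q.2 else 0

/-- det (A*B - z•1) = det (B*A - z•1) -/
lemma det_mul_sub_smul_one_comm {n : ℕ} (A B : Matrix (Fin n) (Fin n) ℂ) (z : ℂ) :
    (A * B - z • (1 : Matrix (Fin n) (Fin n) ℂ)).det
      = (B * A - z • (1 : Matrix (Fin n) (Fin n) ℂ)).det := by
  rcases eq_or_ne z 0 with rfl | hz
  · simp [Matrix.det_mul, mul_comm]
  · have h1 : A * B - z • (1 : Matrix (Fin n) (Fin n) ℂ)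
        = (-z) • (1 + ((-z⁻¹) • A) * B) := by
      rw [smul_add, Matrix.smul_mul, smul_smul]
      field_simp
      rw [sub_eq_neg_add, one_smul, neg_smul]
    have h2 : B * A - z • (1 : Matrix (Fin n) (Fin n) ℂ)
        = (-z) • (1 + B * ((-z⁻¹) • A)) := by
      rw [smul_add, Matrix.mul_smul, smul_smul]
      field_simp
      rw [sub_eq_neg_add, one_smul, neg_smul]
    rw [h1, h2, Matrix.det_smul, Matrix.det_smul, det_one_add_mul_comm]

section cyc
open Fin.NatCast
variable {m n : ℕ} [NeZero m] (Ms : Fin m → Matrix (Fin n) (Fin n) ℂ)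

/-- product `Ms s * Ms (s+1) * ⋯ * Ms (s+k-1)` (indices mod m). -/
noncomputable def cyc (s k : ℕ) : Matrix (Fin n) (Fin n) ℂ :=
  Nat.rec 1 (fun k acc => acc * Ms (((s + k : ℕ) : Fin m))) k

@[simp] lemma cyc_zero (s : ℕ) : cyc Ms s 0 = 1 := rfl

lemma cyc_succ (s k : ℕ) : cyc Ms s (k + 1) = cyc Ms s k * Ms (((s + k : ℕ) : Fin m)) := rfl

lemma cyc_add (s k l : ℕ) : cyc Ms s (k + l) = cyc Ms s k * cyc Ms (s + k) l := by
  induction l with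
  | zero => simp
  | succ l ih =>
      rw [← add_assoc, cyc_succ, ih, cyc_succ, Matrix.mul_assoc, add_assoc]

lemma cyc_mod (s k : ℕ) : cyc Ms (s + m) k = cyc Ms s k := by
  induction k with
  | zero => rfl
  | succ k ih =>
      rw [cyc_succ, cyc_succ, ih]
      congr 2
      push_cast [Fin.natCast_self]
      rw [add_zero]

lemma pow_blockCyclic_apply (k : ℕ) : ∀ p q : Fin m × Fin n,
    ((blockCyclic Ms) ^ k) p q
      = if q.1 = p.1 + (k : Fin m) then cyc Ms p.1.val k p.2 q.2 else 0 := by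
  induction k with
  | zero =>
      rintro ⟨a, i⟩ ⟨b, j⟩
      simp only [pow_zero, cyc_zero, Nat.cast_zero, add_zero, Matrix.one_apply, Prod.ext_iff]
      by_cases hab : b = a <;> by_cases hij : j = i
      · simp [hab, hij]
      · simp [hab, hij]
      · simp [hab, hij, Ne.symm hab]
      · simp [hab, hij, Ne.symm hab]
  | succ k ih =>
      intro p q
      rw [pow_succ, Matrix.mul_apply]
      simp only [blockCyclic, Fintype.sum_prod_type, ih, ite_mul, zero_mul, mul_ite, mul_zero]
      rw [Finset.sum_comm]
      simp only [← ite_and]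
      have hcomm : ∀ (x : Fin m), (q.1 = x + 1 ∧ x = p.1 + (k : Fin m))
          ↔ (x = p.1 + (k : Fin m) ∧ q.1 = x + 1) := fun x => and_comm
      simp only [hcomm, ite_and]
      simp only [Finset.sum_ite_eq' Finset.univ, Finset.mem_univ, if_true]
      have hc : ((p.1.val + k : ℕ) : Fin m) = p.1 + (k : Fin m) := by
        push_cast [Fin.cast_val_eq_self]; rfl
      have hk1 : ((k + 1 : ℕ) : Fin m) = (k : Fin m) + 1 := by push_cast; rfl
      by_cases h : q.1 = p.1 + (k : Fin m) + 1
      · simp only [hk1, ← add_assoc, if_pos h, cyc_succ, hc, Matrix.mul_apply]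
      · simp only [hk1, ← add_assoc, if_neg h, Finset.sum_const_zero]
lemma ofFn_prod_eq_cyc : (List.ofFn Ms).prod = cyc Ms 0 m := by
  have key : ∀ k, (List.ofFn (fun i : Fin k => Ms ((i : ℕ) : Fin m))).prod = cyc Ms 0 k := by
    intro k
    induction k with
    | zero => simp
    | succ k ih =>
        rw [List.ofFn_succ', List.prod_concat, cyc_succ, zero_add]
        congr 1
  rw [← key m]
  exact congrArg _ (congrArg List.ofFn (funext fun i => congrArg Ms (Fin.cast_val_eq_self i).symm))

end cyc

theorem det_pow_blockCyclic {m n : ℕ} [NeZero m]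
    (Ms : Fin m → Matrix (Fin n) (Fin n) ℂ)
    (P : Matrix (Fin n) (Fin n) ℂ)
    (hP : P = (List.ofFn Ms).prod) :
    ∀ z : ℂ,
      ((blockCyclic Ms) ^ m - z • (1 : Matrix (Fin m × Fin n) (Fin m × Fin n) ℂ)).det
        = ((P - z • (1 : Matrix (Fin n) (Fin n) ℂ)).det) ^ m := by
  intro z
  have hpow : ∀ p q : Fin m × Fin n, ((blockCyclic Ms) ^ m) p q
      = if q.1 = p.1 then cyc Ms p.1.val m p.2 q.2 else 0 := by
    intro p q
    rw [pow_blockCyclic_apply]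
    simp [Fin.natCast_self]
  set D : Fin m → Matrix (Fin n) (Fin n) ℂ :=
    fun a => cyc Ms a.val m - z • 1 with hD
  have hM : (blockCyclic Ms) ^ m - z • (1 : Matrix (Fin m × Fin n) (Fin m × Fin n) ℂ)
      = (Matrix.blockDiagonal D).submatrix (Equiv.prodComm (Fin m) (Fin n))
          (Equiv.prodComm (Fin m) (Fin n)) := by
    ext ⟨a, i⟩ ⟨b, j⟩
    simp only [Matrix.sub_apply, Matrix.smul_apply, Matrix.one_apply, hpow,
      Matrix.submatrix_apply, Equiv.prodComm_apply, Prod.swap_prod_mk,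
      Matrix.blockDiagonal_apply, hD, Prod.ext_iff, smul_eq_mul]
    by_cases hab : b = a
    · subst hab
      simp [eq_comm]
    · simp [hab, Ne.symm hab]
  have hblock : ∀ a : Fin m, (D a).det
      = (P - z • (1 : Matrix (Fin n) (Fin n) ℂ)).det := by
    intro a
    have ht : a.val + (m - a.val) = m := Nat.add_sub_cancel' a.isLt.le
    have h1 : cyc Ms a.val m = cyc Ms a.val (m - a.val) * cyc Ms 0 a.val := by
      have h := cyc_add Ms a.val (m - a.val) a.val
      rw [Nat.sub_add_cancel a.isLt.le,
        show a.val + (m - a.val) = 0 + m from by omega, cyc_mod] at h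
      exact h
    have h2 : P = cyc Ms 0 a.val * cyc Ms a.val (m - a.val) := by
      have h := cyc_add Ms 0 a.val (m - a.val)
      rw [ht, zero_add] at h
      rw [hP, ofFn_prod_eq_cyc]
      exact h
    simp only [hD]
    rw [h1, h2, det_mul_sub_smul_one_comm]
  rw [hM, Matrix.det_submatrix_equiv_self, Matrix.det_blockDiagonal]
  simp [hblock]
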